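/- Let a be a nonzero linear form over ℂ and let f be a ternary cubic form. Then the determinant of the 3×3 matrix with rows (∂₁f, ∂₂f, ∂₃f), (∂₁a, ∂₂a, ∂₃a), (u₁, u₂, u₃) is the zero polynomial for every (u₁,u₂,u₃) ∈ ℂ³ (i.e. the Jacobian of f, a and every linear form vanishes identically) if and only if a³ divides f, i.e. f = t·a³ for some t ∈ ℂ. -/

import Mathlib

open MvPolynomial

lemma degAdd (m n : Fin 3 →₀ ℕ) : (m + n).degree = m.degree + n.degree := by
  simp [Finsupp.degree_eq_weight_one, map_add]

lemma degSingle (i : Fin 3) : (Finsupp.single i 1).degree = 1 := by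
  rw [Finsupp.degree_apply, Finsupp.support_single_ne_zero _ one_ne_zero, Finset.sum_singleton,
    Finsupp.single_eq_same]

lemma degMem {p : MvPolynomial (Fin 3) ℂ} {n : ℕ} (hp : p.IsHomogeneous n)
    {m : Fin 3 →₀ ℕ} (hm : coeff m p ≠ 0) : m.degree = n := by
  by_contra h
  exact hm (hp.coeff_eq_zero h)

lemma subAddSingle {m : Fin 3 →₀ ℕ} {i : Fin 3} (h : m i ≠ 0) :
    (m - Finsupp.single i 1) + Finsupp.single i 1 = m := by
  classical
  ext j
  rcases eq_or_ne j i with rfl | hj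
  · simp only [Finsupp.add_apply, Finsupp.tsub_apply, Finsupp.single_eq_same]
    omega
  · simp [Finsupp.single_apply, Ne.symm hj, Finsupp.tsub_apply]

lemma pderivHom (i : Fin 3) (p : MvPolynomial (Fin 3) ℂ) (n : ℕ) (hp : p.IsHomogeneous (n+1)) :
    (pderiv i p).IsHomogeneous n := by
  conv_lhs => rw [p.as_sum]
  rw [map_sum]
  apply IsHomogeneous.sum
  intro m hm
  rw [pderiv_monomial]
  by_cases h : m i = 0
  · simp only [h, Nat.cast_zero, mul_zero, monomial_zero]
    exact isHomogeneous_zero _ _ _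
  · apply isHomogeneous_monomial
    have hmd : m.degree = n + 1 := degMem hp (mem_support_iff.mp hm)
    have := congrArg Finsupp.degree (subAddSingle h)
    rw [degAdd, degSingle] at this
    omega

lemma degUnivSum (m : Fin 3 →₀ ℕ) : m.degree = ∑ i : Fin 3, m i := by
  rw [Finsupp.degree]
  exact Finset.sum_subset (Finset.subset_univ _) (by intro x _ hx; simpa using hx)

lemma euler (p : MvPolynomial (Fin 3) ℂ) (n : ℕ) (hp : p.IsHomogeneous n) :
    C (n : ℂ) * p = ∑ i : Fin 3, X i * pderiv i p := by
  conv_lhs => rw [p.as_sum]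
  conv_rhs => rw [p.as_sum]
  rw [Finset.mul_sum]
  simp_rw [map_sum, Finset.mul_sum]
  rw [Finset.sum_comm]
  apply Finset.sum_congr rfl
  intro m hm
  have hmd : m.degree = n := degMem hp (mem_support_iff.mp hm)
  have key : ∀ i : Fin 3, X i * pderiv i (monomial m (coeff m p))
      = monomial m (coeff m p * (m i : ℂ)) := by
    intro i
    rw [pderiv_monomial]
    by_cases h : m i = 0
    · simp [h]
    · rw [X, monomial_mul, one_mul]
      rw [add_comm, subAddSingle h]
  simp_rw [key]
  rw [C_mul_monomial, ← map_sum]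
  congr 1
  rw [← Finset.mul_sum]
  have : ∑ i : Fin 3, ((m i : ℂ)) = (n : ℂ) := by
    rw [← hmd, degUnivSum]
    push_cast
    ring
  rw [this, mul_comm]

lemma constOfHom (p : MvPolynomial (Fin 3) ℂ) (hp : p.IsHomogeneous 0) :
    p = C (coeff 0 p) := by
  ext m
  by_cases h : m = 0
  · simp [h]
  · rw [coeff_C, if_neg (Ne.symm h)]
    apply hp.coeff_eq_zero
    simpa [Finsupp.degree_eq_zero_iff] using h

/-- A linear form is a homogeneous polynomial of degree 1. -/
def IsLinearForm (a : MvPolynomial (Fin 3) ℂ) : Prop := a.IsHomogeneous 1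

set_option maxHeartbeats 1000000 in
theorem stmt16 (a f : MvPolynomial (Fin 3) ℂ)
    (ha : IsLinearForm a) (ha0 : a ≠ 0) (hf : f.IsHomogeneous 3) :
    (∀ u : Fin 3 → ℂ,
        Matrix.det !![pderiv 0 f, pderiv 1 f, pderiv 2 f;
                      pderiv 0 a, pderiv 1 a, pderiv 2 a;
                      C (u 0), C (u 1), C (u 2)] = 0) ↔
      ∃ t : ℂ, f = C t * a ^ 3 := by
  have ha' : a.IsHomogeneous 1 := ha
  constructor
  · intro H
    -- minor relations
    have h1 := H ![1,0,0]
    have h2 := H ![0,1,0]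
    have h3 := H ![0,0,1]
    simp [Matrix.det_fin_three] at h1 h2 h3
    have r01 : pderiv 0 f * pderiv 1 a = pderiv 1 f * pderiv 0 a := by linear_combination h3
    have r10 : pderiv 1 f * pderiv 0 a = pderiv 0 f * pderiv 1 a := by linear_combination -h3
    have r02 : pderiv 0 f * pderiv 2 a = pderiv 2 f * pderiv 0 a := by linear_combination -h2
    have r20 : pderiv 2 f * pderiv 0 a = pderiv 0 f * pderiv 2 a := by linear_combination h2
    have r12 : pderiv 1 f * pderiv 2 a = pderiv 2 f * pderiv 1 a := by linear_combination h1
    have r21 : pderiv 2 f * pderiv 1 a = pderiv 1 f * pderiv 2 a := by linear_combination -h1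
    have hp : ∀ i j : Fin 3, pderiv i f * pderiv j a = pderiv j f * pderiv i a := by
      have htri : ∀ m : Fin 3, m = 0 ∨ m = 1 ∨ m = 2 := by decide
      intro i j
      rcases htri i with rfl | rfl | rfl <;> rcases htri j with rfl | rfl | rfl <;>
        first
          | with_reducible rfl
          | with_reducible exact r01
          | with_reducible exact r10
          | with_reducible exact r02
          | with_reducible exact r20
          | with_reducible exact r12
          | with_reducible exact r21
    -- the partials of a are constants
    set c : Fin 3 → ℂ := fun i => coeff 0 (pderiv i a) with hc
    have hb : ∀ i, pderiv i a = C (c i) := fun i => constOfHom _ (pderivHom i a 0 ha')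
    -- Euler identities
    have e3 := euler f 3 hf
    have e1 := euler a 1 ha'
    simp only [Nat.cast_ofNat, map_ofNat] at e3
    simp only [Nat.cast_one, map_one, one_mul] at e1
    rw [Fin.sum_univ_three] at e3 e1
    -- some c k is nonzero
    have hk : ∃ k, c k ≠ 0 := by
      by_contra hcon
      push_neg at hcon
      apply ha0
      have hz : ∀ i, pderiv i a = 0 := fun i => by rw [hb i, hcon i, map_zero]
      rw [hz 0, hz 1, hz 2] at e1
      simpa using e1
    obtain ⟨k, hck⟩ := hk
    -- key equation : C (3 * c k) * f = a * pderiv k f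
    have s : ∀ i : Fin 3, X i * pderiv i f * C (c k) = X i * pderiv i a * pderiv k f := by
      intro i
      rw [← hb k]
      linear_combination X i * hp i k
    have E1num : 3 * C (c k) * f = a * pderiv k f := by
      linear_combination C (c k) * e3 + s 0 + s 1 + s 2 - pderiv k f * e1
    have E1 : C (3 * c k) * f = a * pderiv k f := by
      rw [map_mul, map_ofNat]; linear_combination E1num
    set g : MvPolynomial (Fin 3) ℂ := pderiv k f with hg
    set g1 : MvPolynomial (Fin 3) ℂ := pderiv k g with hg1
    set g2 : MvPolynomial (Fin 3) ℂ := pderiv k g1 with hg2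
    -- differentiate
    have dE1 := congrArg (pderiv k) E1
    simp only [pderiv_mul, pderiv_C_mul, pderiv_C, hb k, zero_mul, zero_add, add_zero] at dE1
    rw [map_mul, map_ofNat] at dE1
    have E2num : 2 * C (c k) * g = a * g1 := by linear_combination dE1
    have E2 : C (2 * c k) * g = a * g1 := by
      rw [map_mul, map_ofNat]; linear_combination E2num
    have dE2 := congrArg (pderiv k) E2
    simp only [pderiv_mul, pderiv_C_mul, pderiv_C, hb k, zero_mul, zero_add, add_zero] at dE2
    rw [map_mul, map_ofNat] at dE2
    have E3 : C (c k) * g1 = a * g2 := by linear_combination dE2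
    -- g2 is a constant
    have hg2hom : g2.IsHomogeneous 0 :=
      pderivHom k g1 0 (pderivHom k g 1 (pderivHom k f 2 hf))
    set s0 : ℂ := coeff 0 g2 with hs0
    have hg2C : g2 = C s0 := constOfHom _ hg2hom
    rw [hg2C] at E3
    -- conclude
    refine ⟨s0 / (6 * c k ^ 3), ?_⟩
    have h6 : (6 : ℂ) * c k ^ 3 ≠ 0 :=
      mul_ne_zero (by norm_num) (pow_ne_zero 3 hck)
    have hC6 : (C (6 * c k ^ 3) : MvPolynomial (Fin 3) ℂ) ≠ 0 := by
      simpa using h6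
    apply mul_left_cancel₀ hC6
    have hr : (C (6 * c k ^ 3) : MvPolynomial (Fin 3) ℂ) * (C (s0 / (6 * c k ^ 3)) * a ^ 3)
        = C s0 * a ^ 3 := by
      rw [← mul_assoc, ← map_mul, mul_div_cancel₀ _ h6]
    rw [hr]
    have expand : (C (6 * c k ^ 3) : MvPolynomial (Fin 3) ℂ)
        = 6 * (C (c k) * C (c k) * C (c k)) := by
      rw [show (6 : ℂ) * c k ^ 3 = 6 * (c k * c k * c k) by ring, map_mul, map_ofNat,
        map_mul, map_mul]
    rw [expand]
    linear_combination (2 * C (c k) * C (c k)) * E1num + (C (c k) * a) * E2num + a ^ 2 * E3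
  · rintro ⟨t, rfl⟩
    intro u
    simp [Matrix.det_fin_three, pderiv_C_mul, pderiv_pow]
    ring
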